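/- Let A be a bialgebra over a commutative ring and F an invertible element of A ⊗ A satisfying the twist equation F₁₂ · (Δ ⊗ id)(F) = F₂₃ · (id ⊗ Δ)(F) and the counit conditions (ε ⊗ id)(F) = 1 and (id ⊗ ε)(F) = 1. Then the twisted coproduct Δ_F(a) = F · Δ(a) · F⁻¹ is coassociative and counital: (Δ_F ⊗ id) ∘ Δ_F = (id ⊗ Δ_F) ∘ Δ_F and (ε ⊗ id) ∘ Δ_F = id = (id ⊗ ε) ∘ Δ_F. -/

import Mathlib

open TensorProduct

section Aux

variable {R A : Type*} [CommRing R] [Ring A] [Bialgebra R A]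

lemma aux_rT_mulLeft (G : A ⊗[R] A) (x : (A ⊗[R] A) ⊗[R] A) :
    LinearMap.rTensor A (LinearMap.mulLeft R G) x = (G ⊗ₜ[R] (1 : A)) * x := by
  induction x using TensorProduct.induction_on with
  | zero => simp
  | tmul y z => simp [Algebra.TensorProduct.tmul_mul_tmul]
  | add y z hy hz => simp [hy, hz, mul_add]

lemma aux_rT_mulRight (G : A ⊗[R] A) (x : (A ⊗[R] A) ⊗[R] A) :
    LinearMap.rTensor A (LinearMap.mulRight R G) x = x * (G ⊗ₜ[R] (1 : A)) := by
  induction x using TensorProduct.induction_on with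
  | zero => simp
  | tmul y z => simp [Algebra.TensorProduct.tmul_mul_tmul]
  | add y z hy hz => simp [hy, hz, add_mul]

lemma aux_lT_mulLeft (G : A ⊗[R] A) (x : A ⊗[R] (A ⊗[R] A)) :
    LinearMap.lTensor A (LinearMap.mulLeft R G) x = ((1 : A) ⊗ₜ G) * x := by
  induction x using TensorProduct.induction_on with
  | zero => simp
  | tmul y z => simp [Algebra.TensorProduct.tmul_mul_tmul]
  | add y z hy hz => simp [hy, hz, mul_add]

lemma aux_lT_mulRight (G : A ⊗[R] A) (x : A ⊗[R] (A ⊗[R] A)) :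
    LinearMap.lTensor A (LinearMap.mulRight R G) x = x * ((1 : A) ⊗ₜ G) := by
  induction x using TensorProduct.induction_on with
  | zero => simp
  | tmul y z => simp [Algebra.TensorProduct.tmul_mul_tmul]
  | add y z hy hz => simp [hy, hz, add_mul]

lemma aux_rT_comul :
    (LinearMap.rTensor A (Coalgebra.comul (R := R) (A := A)) :
        A ⊗[R] A →ₗ[R] (A ⊗[R] A) ⊗[R] A)
      = (Algebra.TensorProduct.map (Bialgebra.comulAlgHom R A) (AlgHom.id R A)).toLinearMap := by
  ext x y; simp

lemma aux_lT_comul :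
    (LinearMap.lTensor A (Coalgebra.comul (R := R) (A := A)) :
        A ⊗[R] A →ₗ[R] A ⊗[R] (A ⊗[R] A))
      = (Algebra.TensorProduct.map (AlgHom.id R A) (Bialgebra.comulAlgHom R A)).toLinearMap := by
  ext x y; simp

lemma aux_counitL (x : A ⊗[R] A) :
    (TensorProduct.lid R A) ((LinearMap.rTensor A (Coalgebra.counit (R := R) (A := A))) x)
      = ((Algebra.TensorProduct.lid R A).toAlgHom.comp
          (Algebra.TensorProduct.map (Bialgebra.counitAlgHom R A) (AlgHom.id R A))) x := by
  induction x using TensorProduct.induction_on with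
  | zero => simp
  | tmul y z => simp
  | add y z hy hz => simp_all

lemma aux_counitR (x : A ⊗[R] A) :
    (TensorProduct.rid R A) ((LinearMap.lTensor A (Coalgebra.counit (R := R) (A := A))) x)
      = ((Algebra.TensorProduct.rid R R A).toAlgHom.comp
          (Algebra.TensorProduct.map (AlgHom.id R A) (Bialgebra.counitAlgHom R A))) x := by
  induction x using TensorProduct.induction_on with
  | zero => simp
  | tmul y z => simp
  | add y z hy hz => simp_all

end Aux

set_option maxHeartbeats 1000000 in
/-- If `F` is an invertible element of `A ⊗ A` satisfying the Drinfeld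
twist equation `F₁₂ (Δ ⊗ id)(F) = F₂₃ (id ⊗ Δ)(F)` and the counit conditions, then
the twisted coproduct `Δ_F(a) = F Δ(a) F⁻¹` is coassociative and counital. -/
theorem twisted_coproduct_coassoc {R A : Type*} [CommRing R] [Ring A] [Bialgebra R A]
    (F Finv : A ⊗[R] A) (hinv1 : F * Finv = 1) (hinv2 : Finv * F = 1)
    (hcounitL : (TensorProduct.lid R A)
      ((LinearMap.rTensor A (Coalgebra.counit (R := R) (A := A))) F) = 1)
    (hcounitR : (TensorProduct.rid R A)
      ((LinearMap.lTensor A (Coalgebra.counit (R := R) (A := A))) F) = 1)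
    (htwist :
      (Algebra.TensorProduct.assoc R R R A A A)
          ((Algebra.TensorProduct.includeLeft :
              (A ⊗[R] A) →ₐ[R] (A ⊗[R] A) ⊗[R] A) F)
        * ((Algebra.TensorProduct.assoc R R R A A A).toAlgHom.comp
            (Algebra.TensorProduct.map (Bialgebra.comulAlgHom R A) (AlgHom.id R A))) F
      = ((Algebra.TensorProduct.includeRight :
              (A ⊗[R] A) →ₐ[R] A ⊗[R] (A ⊗[R] A)) F)
        * (Algebra.TensorProduct.map (AlgHom.id R A) (Bialgebra.comulAlgHom R A)) F) :
    let ΔF : A →ₗ[R] A ⊗[R] A :=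
      (LinearMap.mulLeft R F) ∘ₗ (LinearMap.mulRight R Finv) ∘ₗ
        (Coalgebra.comul (R := R) (A := A))
    (∀ a : A,
      (TensorProduct.assoc R A A A) ((TensorProduct.map ΔF LinearMap.id) (ΔF a))
        = (TensorProduct.map LinearMap.id ΔF) (ΔF a)) ∧
    (∀ a : A,
      (TensorProduct.lid R A)
          ((LinearMap.rTensor A (Coalgebra.counit (R := R) (A := A))) (ΔF a)) = a) ∧
    (∀ a : A,
      (TensorProduct.rid R A)
          ((LinearMap.lTensor A (Coalgebra.counit (R := R) (A := A))) (ΔF a)) = a) := by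
  intro ΔF
  set Δ₁ := Algebra.TensorProduct.map (Bialgebra.comulAlgHom R A) (AlgHom.id R A) with hΔ₁
  set Δ₂ := Algebra.TensorProduct.map (AlgHom.id R A) (Bialgebra.comulAlgHom R A) with hΔ₂
  set α := Algebra.TensorProduct.assoc R R R A A A with hα
  -- ΔF as a product
  have hΔF : ∀ a : A, ΔF a = F * Coalgebra.comul (R := R) a * Finv := by
    intro a
    simp [ΔF, mul_assoc]
  -- the (ΔF ⊗ id) map as conjugation
  have h1 : ∀ x : A ⊗[R] A,
      (TensorProduct.map ΔF LinearMap.id) x = (F ⊗ₜ[R] (1 : A)) * Δ₁ x * (Finv ⊗ₜ[R] (1 : A)) := by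
    intro x
    have : (TensorProduct.map ΔF LinearMap.id) x = LinearMap.rTensor A ΔF x := rfl
    rw [this]
    have hcomp : LinearMap.rTensor A ΔF
        = (LinearMap.rTensor A (LinearMap.mulLeft R F)) ∘ₗ
          (LinearMap.rTensor A (LinearMap.mulRight R Finv)) ∘ₗ
          (LinearMap.rTensor A (Coalgebra.comul (R := R) (A := A))) := by
      simp [ΔF, ← LinearMap.rTensor_comp]
    rw [hcomp]
    simp only [LinearMap.comp_apply, aux_rT_mulLeft, aux_rT_mulRight, aux_rT_comul]
    rw [mul_assoc]
    rfl
  have h2 : ∀ x : A ⊗[R] A,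
      (TensorProduct.map LinearMap.id ΔF) x = ((1 : A) ⊗ₜ[R] F) * Δ₂ x * ((1 : A) ⊗ₜ[R] Finv) := by
    intro x
    have : (TensorProduct.map LinearMap.id ΔF) x = LinearMap.lTensor A ΔF x := rfl
    rw [this]
    have hcomp : LinearMap.lTensor A ΔF
        = (LinearMap.lTensor A (LinearMap.mulLeft R F)) ∘ₗ
          (LinearMap.lTensor A (LinearMap.mulRight R Finv)) ∘ₗ
          (LinearMap.lTensor A (Coalgebra.comul (R := R) (A := A))) := by
      simp [ΔF, ← LinearMap.lTensor_comp]
    rw [hcomp]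
    simp only [LinearMap.comp_apply, aux_lT_mulLeft, aux_lT_mulRight, aux_lT_comul]
    rw [mul_assoc]
    rfl
  refine ⟨?_, ?_, ?_⟩
  · -- coassociativity
    intro a
    -- translate htwist
    have htw : α (F ⊗ₜ[R] (1 : A)) * α (Δ₁ F) = ((1 : A) ⊗ₜ[R] F) * Δ₂ F := by
      simpa [Algebra.TensorProduct.includeLeft_apply,
        Algebra.TensorProduct.includeRight_apply] using htwist
    -- inverses
    set X := α (F ⊗ₜ[R] (1 : A)) * α (Δ₁ F) with hX
    set Xinv := α (Δ₁ Finv) * α (Finv ⊗ₜ[R] (1 : A)) with hXinv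
    set Y := ((1 : A) ⊗ₜ[R] F) * Δ₂ F with hY
    set Yinv := Δ₂ Finv * ((1 : A) ⊗ₜ[R] Finv) with hYinv
    have hF1 : (F ⊗ₜ[R] (1 : A)) * (Finv ⊗ₜ[R] (1 : A)) = 1 := by
      rw [Algebra.TensorProduct.tmul_mul_tmul, hinv1, mul_one]; rfl
    have hF1' : (Finv ⊗ₜ[R] (1 : A)) * (F ⊗ₜ[R] (1 : A)) = 1 := by
      rw [Algebra.TensorProduct.tmul_mul_tmul, hinv2, mul_one]; rfl
    have hF2 : ((1 : A) ⊗ₜ[R] F) * ((1 : A) ⊗ₜ[R] Finv) = 1 := by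
      rw [Algebra.TensorProduct.tmul_mul_tmul, hinv1, mul_one]; rfl
    have hF2' : ((1 : A) ⊗ₜ[R] Finv) * ((1 : A) ⊗ₜ[R] F) = 1 := by
      rw [Algebra.TensorProduct.tmul_mul_tmul, hinv2, mul_one]; rfl
    have hXX : X * Xinv = 1 := by
      have : α (Δ₁ F) * α (Δ₁ Finv) = 1 := by
        rw [← map_mul, ← map_mul, hinv1, map_one, map_one]
      calc X * Xinv = α (F ⊗ₜ[R] (1 : A)) * (α (Δ₁ F) * α (Δ₁ Finv)) * α (Finv ⊗ₜ[R] (1 : A)) := by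
            rw [hX, hXinv]; simp only [mul_assoc]
        _ = 1 := by rw [this, mul_one, ← map_mul, hF1, map_one]
    have hXX' : Xinv * X = 1 := by
      have : α (Finv ⊗ₜ[R] (1 : A)) * α (F ⊗ₜ[R] (1 : A)) = 1 := by
        rw [← map_mul, hF1', map_one]
      calc Xinv * X = α (Δ₁ Finv) * (α (Finv ⊗ₜ[R] (1 : A)) * α (F ⊗ₜ[R] (1 : A))) * α (Δ₁ F) := by
            rw [hX, hXinv]; simp only [mul_assoc]
        _ = 1 := by rw [this, mul_one, ← map_mul, ← map_mul, hinv2, map_one, map_one]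
    have hYY : Y * Yinv = 1 := by
      have : Δ₂ F * Δ₂ Finv = 1 := by rw [← map_mul, hinv1, map_one]
      calc Y * Yinv = ((1 : A) ⊗ₜ[R] F) * (Δ₂ F * Δ₂ Finv) * ((1 : A) ⊗ₜ[R] Finv) := by
            rw [hY, hYinv]; simp only [mul_assoc]
        _ = 1 := by rw [this, mul_one, hF2]
    have hXY : X = Y := htw
    have hXYinv : Xinv = Yinv := by
      calc Xinv = Xinv * (Y * Yinv) := by rw [hYY, mul_one]
        _ = (Xinv * X) * Yinv := by rw [hXY]; simp only [mul_assoc]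
        _ = Yinv := by rw [hXX', one_mul]
    -- middle term: coassociativity of comul
    have hmid : α (Δ₁ (Coalgebra.comul (R := R) a)) = Δ₂ (Coalgebra.comul (R := R) a) := by
      have := Coalgebra.coassoc_apply (R := R) (A := A) a
      have e1 : LinearMap.rTensor A (Coalgebra.comul (R := R) (A := A))
          (Coalgebra.comul a) = Δ₁ (Coalgebra.comul (R := R) a) := by
        rw [aux_rT_comul]; rfl
      have e2 : LinearMap.lTensor A (Coalgebra.comul (R := R) (A := A))
          (Coalgebra.comul a) = Δ₂ (Coalgebra.comul (R := R) a) := by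
        rw [aux_lT_comul]; rfl
      rw [e1, e2] at this
      exact this
    -- assemble
    have hassoc : ∀ x : (A ⊗[R] A) ⊗[R] A, (TensorProduct.assoc R A A A) x = α x := fun _ => rfl
    rw [h1, h2, hΔF, hassoc, map_mul, map_mul, map_mul, map_mul, map_mul, map_mul, hmid]
    calc α (F ⊗ₜ[R] (1:A)) * (α (Δ₁ F) * Δ₂ (Coalgebra.comul (R := R) a) * α (Δ₁ Finv))
          * α (Finv ⊗ₜ[R] (1:A))
        = X * Δ₂ (Coalgebra.comul (R := R) a) * Xinv := by rw [hX, hXinv]; simp only [mul_assoc]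
      _ = Y * Δ₂ (Coalgebra.comul (R := R) a) * Yinv := by rw [hXY, hXYinv]
      _ = ((1:A) ⊗ₜ[R] F) * (Δ₂ F * Δ₂ (Coalgebra.comul (R := R) a) * Δ₂ Finv)
          * ((1:A) ⊗ₜ[R] Finv) := by rw [hY, hYinv]; simp only [mul_assoc]
      _ = ((1:A) ⊗ₜ[R] F) * Δ₂ (F * Coalgebra.comul (R := R) a * Finv)
          * ((1:A) ⊗ₜ[R] Finv) := by rw [map_mul, map_mul]
  · -- left counit
    intro a
    set g := ((Algebra.TensorProduct.lid R A).toAlgHom.comp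
        (Algebra.TensorProduct.map (Bialgebra.counitAlgHom R A) (AlgHom.id R A))) with hg
    have hgF : g F = 1 := by rw [← aux_counitL]; exact hcounitL
    have hgFinv : g Finv = 1 := by
      have : g F * g Finv = 1 := by rw [← map_mul, hinv1, map_one]
      rwa [hgF, one_mul] at this
    have hgΔ : g (Coalgebra.comul (R := R) a) = a := by
      rw [← aux_counitL, Coalgebra.rTensor_counit_comul]
      simp
    rw [aux_counitL, hΔF, map_mul, map_mul, hgF, hgFinv, hgΔ, one_mul, mul_one]
  · -- right counit
    intro a
    set g := ((Algebra.TensorProduct.rid R R A).toAlgHom.comp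
        (Algebra.TensorProduct.map (AlgHom.id R A) (Bialgebra.counitAlgHom R A))) with hg
    have hgF : g F = 1 := by rw [← aux_counitR]; exact hcounitR
    have hgFinv : g Finv = 1 := by
      have : g F * g Finv = 1 := by rw [← map_mul, hinv1, map_one]
      rwa [hgF, one_mul] at this
    have hgΔ : g (Coalgebra.comul (R := R) a) = a := by
      rw [← aux_counitR, Coalgebra.lTensor_counit_comul]
      simp
    rw [aux_counitR, hΔF, map_mul, map_mul, hgF, hgFinv, hgΔ, one_mul, mul_one]
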